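/- arXiv:2102.08935 — 4 statements merged into one kernel-verified Lean document; each statement's English description precedes it below -/
import Mathlib

section
/- Let W_0, W_1, ..., W_n be independent standard exponential random variables, 0 < q < 1, and K_n = ∑_{i=0}^n q^i W_i. Then for all t ≥ 0, P(K_n > t) = ∑_{j=0}^n ((-1)^j q^{j(j+1)/2} / (φ_j(q) φ_{n-j}(q))) · exp(-q^{-j} t). -/
open MeasureTheory ProbabilityTheory Real Set
open scoped ENNReal


noncomputable def myphi (q : ℝ) (m : ℕ) : ℝ := ∏ i ∈ Finset.Icc 1 m, (1 - q ^ i)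

noncomputable def myc (q : ℝ) (n j : ℕ) : ℝ :=
  (-1) ^ j * q ^ (j * (j + 1) / 2) / (myphi q j * myphi q (n - j))

variable {q : ℝ} (hq0 : 0 < q) (hq1 : q < 1)

lemma myphi_eq_range (q : ℝ) (m : ℕ) : myphi q m = ∏ i ∈ Finset.range m, (1 - q ^ (i + 1)) := by
  induction m with
  | zero => simp [myphi]
  | succ k ih =>
    rw [myphi, Finset.prod_Icc_succ_top (by omega), ← myphi, ih, Finset.prod_range_succ]

lemma myphi_succ (q : ℝ) (m : ℕ) : myphi q (m + 1) = myphi q m * (1 - q ^ (m + 1)) := by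
  rw [myphi, Finset.prod_Icc_succ_top (by omega), ← myphi]

lemma myphi_zero (q : ℝ) : myphi q 0 = 1 := by simp [myphi]

include hq0 hq1 in
lemma myphi_pos (m : ℕ) : 0 < myphi q m := by
  rw [myphi_eq_range]
  exact Finset.prod_pos fun i _ => by
    have : q ^ (i + 1) < 1 := pow_lt_one₀ hq0.le hq1 (by omega)
    linarith

include hq0 hq1 in
lemma myphi_ne (m : ℕ) : myphi q m ≠ 0 := (myphi_pos hq0 hq1 m).ne'

include hq0 hq1 in
lemma one_sub_qpow_ne (k : ℕ) (hk : 0 < k) : (1:ℝ) - q ^ k ≠ 0 := by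
  have : q ^ k < 1 := pow_lt_one₀ hq0.le hq1 (by omega)
  linarith

lemma tri_succ (j : ℕ) : (j + 1) * (j + 1 + 1) / 2 = j * (j + 1) / 2 + (j + 1) := by
  have h1 : 2 ∣ j * (j+1) := (Nat.even_mul_succ_self j).two_dvd
  have h3 : (j+1)*(j+1+1) = j*(j+1) + 2*(j+1) := by ring
  omega

include hq0 hq1 in
/-- The key polynomial identity. -/
lemma sum_myc_pow (n : ℕ) (x : ℝ) :
    myphi q n * ∑ j ∈ Finset.range (n + 1), myc q n j * x ^ j
      = ∏ i ∈ Finset.range n, (1 - q ^ (i + 1) * x) := by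
  induction n generalizing x with
  | zero => simp [myphi_zero, myc]
  | succ n ih =>
    have claimA : (1 - q ^ (n+1)) * ∑ j ∈ Finset.range (n + 2), myc q (n+1) j * x ^ j
        = (1 - q * x) * ∑ j ∈ Finset.range (n + 1), myc q n j * (q * x) ^ j := by
      have hS3 : ∑ j ∈ Finset.range (n + 2), (if j = 0 then (0:ℝ) else myc q n (j-1) * q ^ j * x ^ j)
          = (q * x) * ∑ j ∈ Finset.range (n + 1), myc q n j * (q*x) ^ j := by
        rw [Finset.sum_range_succ'
          (fun j => if j = 0 then (0:ℝ) else myc q n (j-1) * q ^ j * x ^ j) (n+1)]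
        rw [Finset.mul_sum (Finset.range (n+1)) (fun j => myc q n j * (q*x) ^ j) (q*x)]
        simp only [Nat.succ_ne_zero, if_false, if_pos rfl, if_true, add_zero, Nat.add_sub_cancel]
        apply Finset.sum_congr rfl
        intro j hj
        rw [mul_pow]; ring
      have hS2 : ∑ j ∈ Finset.range (n + 2), (if j ≤ n then myc q n j * q ^ j * x ^ j else (0:ℝ))
          = ∑ j ∈ Finset.range (n + 1), myc q n j * (q*x) ^ j := by
        rw [Finset.sum_range_succ
          (fun j => if j ≤ n then myc q n j * q ^ j * x ^ j else (0:ℝ)) (n+1),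
          if_neg (by omega), add_zero]
        refine Finset.sum_congr rfl fun j hj => ?_
        rw [if_pos (Nat.lt_succ_iff.mp (Finset.mem_range.mp hj)), mul_pow]
        ring
      have expand : (1 - q * x) * ∑ j ∈ Finset.range (n + 1), myc q n j * (q*x) ^ j
          = (∑ j ∈ Finset.range (n + 2), (if j ≤ n then myc q n j * q ^ j * x ^ j else (0:ℝ)))
            - ∑ j ∈ Finset.range (n + 2), (if j = 0 then (0:ℝ) else myc q n (j-1) * q ^ j * x ^ j) := by
        rw [sub_mul, one_mul, hS3, hS2]
      rw [expand]
      conv_lhs => rw [Finset.mul_sum]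
      rw [← Finset.sum_sub_distrib]
      refine Finset.sum_congr rfl fun j hj => ?_
      simp only [Finset.mem_range] at hj
      rcases Nat.eq_zero_or_pos j with rfl | hj1
      · rw [if_pos (Nat.zero_le n), if_pos rfl, sub_zero]
        simp only [pow_zero, mul_one, one_mul, myc, Nat.zero_mul, Nat.sub_zero, myphi_zero]
        rw [myphi_succ]
        have h1 := myphi_ne hq0 hq1 n
        have h2 := one_sub_qpow_ne hq0 hq1 (n+1) (by omega)
        field_simp
      rcases eq_or_lt_of_le (show j ≤ n + 1 by omega) with rfl | hjn
      · -- top: j = n+1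
        rw [if_neg (by omega), if_neg (by omega), zero_sub, Nat.add_sub_cancel]
        simp only [myc, Nat.sub_self, myphi_zero, mul_one]
        rw [tri_succ n, pow_add, myphi_succ, pow_succ (-1:ℝ) n]
        have h1 := myphi_ne hq0 hq1 n
        have h2 := one_sub_qpow_ne hq0 hq1 (n+1) (by omega)
        field_simp
        ring
      · -- middle: 1 ≤ j ≤ n
        rw [if_pos (by omega), if_neg (by omega)]
        obtain ⟨i, rfl⟩ : ∃ i, j = i + 1 := ⟨j - 1, by omega⟩
        have hin : i + 1 ≤ n := by omega
        simp only [Nat.add_sub_cancel, myc]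
        rw [tri_succ i, pow_succ (-1:ℝ) i,
          show n + 1 - (i+1) = (n - (i+1)) + 1 by omega,
          show n - i = (n - (i+1)) + 1 by omega,
          myphi_succ q (n - (i+1)), myphi_succ q i]
        have h1 := myphi_ne hq0 hq1 i
        have h2 := myphi_ne hq0 hq1 (n - (i+1))
        have h3 := one_sub_qpow_ne hq0 hq1 (i+1) (by omega)
        have h4 := one_sub_qpow_ne hq0 hq1 (n - (i+1) + 1) (by omega)
        have hpow : q ^ (i+1) * q ^ (n - (i+1) + 1) = q ^ (n + 1) := by
          rw [← pow_add]; congr 1; omega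
        rw [← hpow]
        field_simp
        ring
    have prodrec : ∏ i ∈ Finset.range (n+1), (1 - q ^ (i + 1) * x)
        = (1 - q * x) * ∏ i ∈ Finset.range n, (1 - q ^ (i + 1) * (q * x)) := by
      rw [Finset.prod_range_succ' (fun i => 1 - q ^ (i+1) * x) n,
        show (1 - q^(0+1) * x) = (1 - q * x) by norm_num, mul_comm]
      congr 1
      exact Finset.prod_congr rfl fun i _ => by rw [pow_succ]; ring
    rw [myphi_succ, prodrec, ← ih (q * x)]
    calc myphi q n * (1 - q ^ (n+1)) * ∑ j ∈ Finset.range (n + 1 + 1), myc q (n+1) j * x ^ j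
        = myphi q n * ((1 - q ^ (n+1)) * ∑ j ∈ Finset.range (n + 2), myc q (n+1) j * x ^ j) := by ring
      _ = myphi q n * ((1 - q * x) * ∑ j ∈ Finset.range (n + 1), myc q n j * (q * x) ^ j) := by rw [claimA]
      _ = (1 - q * x) * (myphi q n * ∑ j ∈ Finset.range (n + 1), myc q n j * (q * x) ^ j) := by ring

include hq0 hq1 in
lemma sum_myc_one (n : ℕ) : ∑ j ∈ Finset.range (n+1), myc q n j = 1 := by
  have h := sum_myc_pow hq0 hq1 n 1
  simp only [one_pow, mul_one] at h
  rw [← myphi_eq_range] at h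
  have hne := myphi_ne hq0 hq1 n
  have := mul_left_cancel₀ hne (h.trans (mul_one (myphi q n)).symm)
  exact this

include hq0 hq1 in
lemma myc_top (n : ℕ) : myc q (n+1) (n+1) = 1 - ∑ j ∈ Finset.range (n+1), myc q (n+1) j := by
  have h := sum_myc_one hq0 hq1 (n+1)
  rw [Finset.sum_range_succ] at h
  linarith

include hq0 hq1 in
lemma myc_ratio (n j : ℕ) (hj : j ≤ n) :
    myc q n j * ((q^(n+1))⁻¹ / ((q^j)⁻¹ - (q^(n+1))⁻¹)) = - myc q (n+1) j := by
  have hq := hq0.ne'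
  have hqj : q^j ≠ 0 := pow_ne_zero _ hq
  have hqn : q^(n+1) ≠ 0 := pow_ne_zero _ hq
  have hlt : q^(n+1) < q^j := pow_lt_pow_right_of_lt_one₀ hq0 hq1 (by omega)
  have h1 : (q^j)⁻¹ < (q^(n+1))⁻¹ := by
    apply inv_strictAnti₀ (by positivity) hlt
  have hd : (q^j)⁻¹ - (q^(n+1))⁻¹ ≠ 0 := by linarith
  have hd2 : q^(n+1) - q^j ≠ 0 := sub_ne_zero.2 hlt.ne
  have h4 := one_sub_qpow_ne hq0 hq1 (n+1-j) (by omega)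
  have hpow : q^j * q^(n+1-j) = q^(n+1) := by rw [← pow_add]; congr 1; omega
  have hratio : (q^(n+1))⁻¹ / ((q^j)⁻¹ - (q^(n+1))⁻¹) = -(1 - q^(n+1-j))⁻¹ := by
    field_simp [hd2]
    linear_combination -hpow
  have hphi_j := myphi_ne hq0 hq1 j
  have hphi := myphi_ne hq0 hq1 (n-j)
  rw [hratio, myc, myc, show n + 1 - j = (n - j) + 1 by omega, myphi_succ,
    show (n:ℕ) - j + 1 = n + 1 - j by omega]
  field_simp

include hq0 hq1 in
lemma coeff_combine (n : ℕ) (E : ℕ → ℝ) (R : ℝ) :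
    (∑ j ∈ Finset.range (n+1),
        myc q n j * ((q^(n+1))⁻¹ / ((q^j)⁻¹ - (q^(n+1))⁻¹)) * (R - E j)) + R
      = ∑ j ∈ Finset.range (n+1), myc q (n+1) j * E j + myc q (n+1) (n+1) * R := by
  have hterm : ∀ j ∈ Finset.range (n+1),
      myc q n j * ((q^(n+1))⁻¹ / ((q^j)⁻¹ - (q^(n+1))⁻¹)) * (R - E j)
        = myc q (n+1) j * E j - myc q (n+1) j * R := by
    intro j hj
    rw [show myc q n j * ((q^(n+1))⁻¹ / ((q^j)⁻¹ - (q^(n+1))⁻¹)) * (R - E j)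
        = (myc q n j * ((q^(n+1))⁻¹ / ((q^j)⁻¹ - (q^(n+1))⁻¹))) * (R - E j) by ring,
      myc_ratio hq0 hq1 n j (Nat.lt_succ_iff.mp (Finset.mem_range.mp hj))]
    ring
  rw [Finset.sum_congr rfl hterm, Finset.sum_sub_distrib, ← Finset.sum_mul,
    myc_top hq0 hq1 n]
  ring

lemma expMeasure_Iic {r : ℝ} (hr : 0 < r) (s : ℝ) :
    expMeasure r (Iic s) = ENNReal.ofReal (if 0 ≤ s then 1 - Real.exp (-(r*s)) else 0) := by
  rw [expMeasure, gammaMeasure, withDensity_apply _ measurableSet_Iic]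
  rw [show gammaPDF 1 r = exponentialPDF r from rfl]
  exact lintegral_exponentialPDF_eq_antiDeriv hr s

lemma expMeasure_Ioi {r : ℝ} (hr : 0 < r) (s : ℝ) :
    expMeasure r (Ioi s) = ENNReal.ofReal (Real.exp (-(r * max s 0))) := by
  have : IsProbabilityMeasure (expMeasure r) := isProbabilityMeasure_expMeasure hr
  have hc : Ioi s = (Iic s)ᶜ := by simp
  rw [hc, measure_compl measurableSet_Iic (measure_ne_top _ _), measure_univ,
    expMeasure_Iic hr s]
  rcases le_or_gt 0 s with h | h
  · rw [if_pos h, max_eq_left h]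
    have h1 : Real.exp (-(r*s)) ≤ 1 := Real.exp_le_one_iff.2 (by nlinarith)
    have h2 : (0:ℝ) ≤ Real.exp (-(r*s)) := (Real.exp_pos _).le
    rw [show (1:ℝ≥0∞) = ENNReal.ofReal 1 by simp, ← ENNReal.ofReal_sub _ (by linarith)]
    norm_num
  · rw [if_neg (by linarith), max_eq_right h.le]
    simp

lemma map_const_mul_expMeasure {c r : ℝ} (hc : 0 < c) (hr : 0 < r) :
    Measure.map (fun x => c * x) (expMeasure r) = expMeasure (r / c) := by
  have h1 : IsProbabilityMeasure (expMeasure r) := isProbabilityMeasure_expMeasure hr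
  have h2 : IsProbabilityMeasure (expMeasure (r / c)) :=
    isProbabilityMeasure_expMeasure (by positivity)
  have hmeas : Measurable fun x : ℝ => c * x := measurable_const_mul c
  have : IsFiniteMeasure (Measure.map (fun x => c * x) (expMeasure r)) := by
    constructor
    rw [Measure.map_apply hmeas MeasurableSet.univ]
    simp
  refine MeasureTheory.Measure.ext_of_Iic _ _ fun a => ?_
  have hpre : (fun x : ℝ => c * x) ⁻¹' Iic a = Iic (a / c) := by
    ext x; rw [Set.mem_preimage, Set.mem_Iic, Set.mem_Iic, ← le_div_iff₀' hc]
  rw [Measure.map_apply hmeas measurableSet_Iic, hpre, expMeasure_Iic hr,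
    expMeasure_Iic (show (0:ℝ) < r / c by positivity)]
  have heq : r * (a / c) = r / c * a := by ring
  congr 1
  rcases le_or_gt 0 a with ha | ha
  · rw [if_pos (div_nonneg ha hc.le), if_pos ha, heq]
  · rw [if_neg (not_le.2 (div_neg_of_neg_of_pos ha hc)), if_neg (not_le.2 ha)]

lemma exp_hasDeriv (c x : ℝ) (hc : c ≠ 0) :
    HasDerivAt (fun y => Real.exp (c * y) / c) (Real.exp (c * x)) x := by
  have h := (((hasDerivAt_id x).const_mul c).exp).div_const c
  simpa [mul_one, mul_div_cancel_right₀ _ hc] using h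

lemma integral_exp_interval (c a b : ℝ) (hc : c ≠ 0) :
    ∫ y in a..b, Real.exp (c * y) = (Real.exp (c * b) - Real.exp (c * a)) / c := by
  rw [intervalIntegral.integral_eq_sub_of_hasDerivAt (fun y _ => exp_hasDeriv c y hc)
    ((Real.continuous_exp.comp (continuous_const.mul continuous_id)).intervalIntegrable a b)]
  ring

lemma integral_exp_rate_Ioi (r a : ℝ) (hr : 0 < r) :
    ∫ y in Ioi a, r * Real.exp (-(r * y)) = Real.exp (-(r * a)) := by
  have hderiv : ∀ x ∈ Ici a, HasDerivAt (fun y => -Real.exp (-(r * y)))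
      (r * Real.exp (-(r * x))) x := by
    intro x _
    have h := (((hasDerivAt_id x).const_mul (-r)).exp).neg
    simpa [Pi.neg_def, neg_mul, mul_one, mul_comm] using h
  have htend : Filter.Tendsto (fun y => -Real.exp (-(r * y))) Filter.atTop (nhds 0) := by
    rw [show (0:ℝ) = -0 by ring]
    refine Filter.Tendsto.neg ?_
    refine Real.tendsto_exp_comp_nhds_zero.mpr ?_
    have h1 : Filter.Tendsto (fun y : ℝ => r * y) Filter.atTop Filter.atTop :=
      Filter.Tendsto.const_mul_atTop hr Filter.tendsto_id
    exact Filter.tendsto_neg_atTop_atBot.comp h1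
  have hint : IntegrableOn (fun y => r * Real.exp (-(r * y))) (Ioi a) := by
    have := (exp_neg_integrableOn_Ioi a hr).const_mul r
    simpa [neg_mul, IntegrableOn] using this
  have := MeasureTheory.integral_Ioi_of_hasDerivAt_of_tendsto' hderiv hint htend
  rw [this]; ring

lemma conv_step {Ω : Type*} [MeasureSpace Ω] [IsProbabilityMeasure (ℙ : Measure Ω)]
    (X Y : Ω → ℝ) (hX : Measurable X) (hY : Measurable Y) (hind : IndepFun X Y ℙ)
    {r : ℝ} (hr : 0 < r) (hYlaw : Measure.map Y ℙ = expMeasure r)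
    (H : ℝ → ℝ) (hHmeas : Measurable H) (hH0 : ∀ s, 0 ≤ H s) (hH1 : ∀ s, H s ≤ 1)
    (hsurv : ∀ s, ℙ {ω | s < X ω} = ENNReal.ofReal (H s)) (t : ℝ) :
    ℙ {ω | t < X ω + Y ω}
      = ENNReal.ofReal (∫ y in Ioi (0:ℝ), r * Real.exp (-(r * y)) * H (t - y)) := by
  have hS : MeasurableSet {p : ℝ × ℝ | t < p.1 + p.2} :=
    measurableSet_lt measurable_const (measurable_fst.add measurable_snd)
  have hmap : Measure.map (fun ω => (X ω, Y ω)) ℙ = (Measure.map X ℙ).prod (Measure.map Y ℙ) :=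
    (ProbabilityTheory.indepFun_iff_map_prod_eq_prod_map_map hX.aemeasurable hY.aemeasurable).mp
      hind
  have hset : {ω | t < X ω + Y ω} = (fun ω => (X ω, Y ω)) ⁻¹' {p : ℝ × ℝ | t < p.1 + p.2} := rfl
  have hprobY : IsProbabilityMeasure (expMeasure r) := isProbabilityMeasure_expMeasure hr
  have hSF : SFinite (Measure.map Y ℙ) := by rw [hYlaw]; infer_instance
  rw [hset, ← Measure.map_apply (hX.prodMk hY) hS, hmap, Measure.prod_apply_symm hS]
  have hXs : ∀ y : ℝ, (Measure.map X ℙ) ((fun x => (x, y)) ⁻¹' {p : ℝ × ℝ | t < p.1 + p.2})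
      = ENNReal.ofReal (H (t - y)) := by
    intro y
    have hpre : ((fun x : ℝ => (x, y)) ⁻¹' {p : ℝ × ℝ | t < p.1 + p.2}) = Ioi (t - y) := by
      ext x; simp [Set.mem_Ioi, sub_lt_iff_lt_add]
    rw [hpre, Measure.map_apply hX measurableSet_Ioi]
    exact hsurv (t - y)
  simp_rw [hXs]
  rw [hYlaw, expMeasure, gammaMeasure, show gammaPDF 1 r = exponentialPDF r from rfl]
  have hpdfmeas : Measurable (exponentialPDF r) := by
    have h : exponentialPDF r = fun x => ENNReal.ofReal (exponentialPDFReal r x) := rfl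
    rw [h]; exact (measurable_exponentialPDFReal r).ennreal_ofReal
  have hHcomp : Measurable fun y : ℝ => ENNReal.ofReal (H (t - y)) :=
    (hHmeas.comp (measurable_const.sub measurable_id)).ennreal_ofReal
  rw [lintegral_withDensity_eq_lintegral_mul _ hpdfmeas hHcomp]
  rw [← MeasureTheory.lintegral_add_compl
    (fun y => (exponentialPDF r * fun y => ENNReal.ofReal (H (t - y))) y)
    (measurableSet_Ioi (a := (0:ℝ)))]
  have hIic : ∫⁻ y in (Ioi (0:ℝ))ᶜ,
      (exponentialPDF r * fun y => ENNReal.ofReal (H (t - y))) y = 0 := by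
    rw [Set.compl_Ioi, ← MeasureTheory.Measure.restrict_congr_set Iio_ae_eq_Iic]
    have h : ∫⁻ y in Iio (0:ℝ), (exponentialPDF r * fun y => ENNReal.ofReal (H (t - y))) y
        = ∫⁻ _ in Iio (0:ℝ), (0:ℝ≥0∞) :=
      MeasureTheory.setLIntegral_congr_fun measurableSet_Iio
        (fun y (hy : y < 0) => by
          rw [Pi.mul_apply, exponentialPDF_of_neg hy, zero_mul])
    rw [h, lintegral_zero]
  rw [hIic, add_zero]
  have hpiece : ∫⁻ y in Ioi (0:ℝ),
      (exponentialPDF r * fun y => ENNReal.ofReal (H (t - y))) y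
      = ∫⁻ y in Ioi (0:ℝ), ENNReal.ofReal (r * Real.exp (-(r * y)) * H (t - y)) := by
    refine MeasureTheory.setLIntegral_congr_fun measurableSet_Ioi
      (fun y (hy : 0 < y) => ?_)
    rw [Pi.mul_apply, exponentialPDF_of_nonneg hy.le,
      ← ENNReal.ofReal_mul (by positivity)]
  rw [hpiece]
  have hintexp : IntegrableOn (fun y => r * Real.exp (-(r * y))) (Ioi (0:ℝ)) := by
    have := (exp_neg_integrableOn_Ioi 0 hr).const_mul r
    simpa [neg_mul, IntegrableOn] using this
  have hfm : Measurable fun y : ℝ => r * Real.exp (-(r * y)) * H (t - y) :=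
    (measurable_const.mul (Real.measurable_exp.comp (measurable_id.const_mul r).neg)).mul
      (hHmeas.comp (measurable_const.sub measurable_id))
  have hint : IntegrableOn (fun y => r * Real.exp (-(r * y)) * H (t - y)) (Ioi (0:ℝ)) := by
    refine Integrable.mono hintexp hfm.aestronglyMeasurable ?_
    · refine Filter.Eventually.of_forall fun y => ?_
      have h1 : 0 ≤ r * Real.exp (-(r * y)) := by positivity
      have h2 : 0 ≤ H (t - y) := hH0 _
      have h3 : H (t - y) ≤ 1 := hH1 _
      rw [Real.norm_eq_abs, Real.norm_eq_abs, abs_of_nonneg (by positivity),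
        abs_of_nonneg h1]
      nlinarith
  rw [← MeasureTheory.ofReal_integral_eq_lintegral_ofReal hint
    (Filter.Eventually.of_forall fun y => mul_nonneg (by positivity) (hH0 _))]
lemma integral_H (r t : ℝ) (hr : 0 < r) (ht : 0 ≤ t) (m : ℕ) (c l : ℕ → ℝ)
    (hl : ∀ j, 0 < l j) (hlr : ∀ j, j < m → l j ≠ r) :
    ∫ y in Ioi (0:ℝ), r * Real.exp (-(r * y)) *
        (if 0 ≤ t - y then ∑ j ∈ Finset.range m, c j * Real.exp (-(l j * (t - y))) else 1)
      = (∑ j ∈ Finset.range m, c j * (r / (l j - r)) *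
          (Real.exp (-(r * t)) - Real.exp (-(l j * t)))) + Real.exp (-(r * t)) := by
  have hsplit : Ioi (0:ℝ) = Ioc 0 t ∪ Ioi t := (Set.Ioc_union_Ioi_eq_Ioi ht).symm
  set f : ℝ → ℝ := fun y => r * Real.exp (-(r * y)) *
    (if 0 ≤ t - y then ∑ j ∈ Finset.range m, c j * Real.exp (-(l j * (t - y))) else 1) with hf
  have heq1 : ∀ y ∈ Ioc (0:ℝ) t, f y
      = ∑ j ∈ Finset.range m, (c j * r * Real.exp (-(l j * t))) * Real.exp ((l j - r) * y) := by
    intro y hy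
    rw [hf]
    simp only
    rw [if_pos (by simp only [mem_Ioc] at hy; linarith), Finset.mul_sum]
    refine Finset.sum_congr rfl fun j _ => ?_
    rw [show -(l j * (t - y)) = -(l j * t) + l j * y by ring, Real.exp_add,
      show ((l j - r) * y) = l j * y + (-(r * y)) by ring, Real.exp_add]
    ring
  have heq2 : ∀ y ∈ Ioi t, f y = r * Real.exp (-(r * y)) := by
    intro y hy
    rw [hf]
    simp only
    rw [if_neg (by simp only [mem_Ioi] at hy; linarith), mul_one]
  have hcont1 : Continuous fun y : ℝ =>
      ∑ j ∈ Finset.range m, (c j * r * Real.exp (-(l j * t))) * Real.exp ((l j - r) * y) :=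
    continuous_finset_sum _ fun j _ =>
      continuous_const.mul (Real.continuous_exp.comp (continuous_const.mul continuous_id))
  have hint1 : IntegrableOn f (Ioc 0 t) := by
    refine IntegrableOn.congr_fun (hcont1.integrableOn_Ioc) (fun y hy => (heq1 y hy).symm)
      measurableSet_Ioc
  have hint2 : IntegrableOn f (Ioi t) := by
    have hb : IntegrableOn (fun y => r * Real.exp (-(r * y))) (Ioi t) := by
      have := (exp_neg_integrableOn_Ioi t hr).const_mul r
      simpa [neg_mul, IntegrableOn] using this
    exact IntegrableOn.congr_fun hb (fun y hy => (heq2 y hy).symm) measurableSet_Ioi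
  rw [hsplit, setIntegral_union Set.Ioc_disjoint_Ioi_same measurableSet_Ioi hint1 hint2]
  have hI2 : ∫ y in Ioi t, f y = Real.exp (-(r * t)) := by
    rw [setIntegral_congr_fun measurableSet_Ioi heq2]
    exact integral_exp_rate_Ioi r t hr
  have hI1 : ∫ y in Ioc 0 t, f y = ∑ j ∈ Finset.range m,
      c j * (r / (l j - r)) * (Real.exp (-(r * t)) - Real.exp (-(l j * t))) := by
    rw [setIntegral_congr_fun measurableSet_Ioc heq1]
    have hintall : ∀ j ∈ Finset.range m, IntegrableOn
        (fun y => c j * r * Real.exp (-(l j * t)) * Real.exp ((l j - r) * y)) (Ioc (0:ℝ) t) :=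
      fun j _ => (continuous_const.mul (Real.continuous_exp.comp
        (continuous_const.mul continuous_id))).integrableOn_Ioc
    rw [integral_finset_sum _ hintall]
    refine Finset.sum_congr rfl fun j hj => ?_
    rw [integral_const_mul, ← intervalIntegral.integral_of_le ht,
      integral_exp_interval _ _ _ (sub_ne_zero.2 (hlr j (Finset.mem_range.1 hj)))]
    have emul : Real.exp (-(l j * t)) * Real.exp ((l j - r) * t) = Real.exp (-(r * t)) := by
      rw [← Real.exp_add]; ring_nf
    have h0 : (l j - r) * (0:ℝ) = 0 := by ring
    have hX : Real.exp (-(l j * t)) * (Real.exp ((l j - r) * t) - 1)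
        = Real.exp (-(r*t)) - Real.exp (-(l j * t)) := by
      rw [mul_sub, emul, mul_one]
    have hd : l j - r ≠ 0 := sub_ne_zero.2 (hlr j (Finset.mem_range.1 hj))
    rw [h0, Real.exp_zero]
    field_simp [hd]
    rw [mul_comm t (l j - r)]
    linear_combination (c j) * hX
  rw [hI1, hI2]

lemma key_induction {Ω : Type*} [MeasureSpace Ω] [IsProbabilityMeasure (ℙ : Measure Ω)]
    {q : ℝ} (hq0 : 0 < q) (hq1 : q < 1) (W : ℕ → Ω → ℝ)
    (hWmeas : ∀ i, Measurable (W i))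
    (hWindep : iIndepFun W ℙ)
    (hWlaw : ∀ i, Measure.map (W i) ℙ = expMeasure 1) :
    ∀ n, ∀ t : ℝ, 0 ≤ t →
      ℙ {ω | t < ∑ i ∈ Finset.range (n+1), q^i * W i ω}
        = ENNReal.ofReal (∑ j ∈ Finset.range (n+1), myc q n j * Real.exp (-((q^j)⁻¹ * t)))
      ∧ 0 ≤ ∑ j ∈ Finset.range (n+1), myc q n j * Real.exp (-((q^j)⁻¹ * t)) := by
  have hq := hq0.ne'
  set Y : ℕ → Ω → ℝ := fun i ω => q^i * W i ω with hYdef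
  have hYmeas : ∀ i, Measurable (Y i) := fun i => (hWmeas i).const_mul (q^i)
  have hYindep : iIndepFun Y ℙ :=
    hWindep.comp (fun i x => q^i * x) (fun i => measurable_const_mul _)
  have hYlaw : ∀ i, Measure.map (Y i) ℙ = expMeasure ((q^i)⁻¹) := by
    intro i
    have hc : (0:ℝ) < q ^ i := pow_pos hq0 i
    have : Y i = (fun x => q^i * x) ∘ W i := rfl
    rw [this, ← Measure.map_map (measurable_const_mul _) (hWmeas i), hWlaw i,
      map_const_mul_expMeasure hc one_pos, one_div]
  have hW0 : ∀ i, ∀ᵐ ω ∂ℙ, 0 ≤ W i ω := by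
    intro i
    have h0 : ℙ (W i ⁻¹' Iio 0) = 0 := by
      rw [← Measure.map_apply (hWmeas i) measurableSet_Iio, hWlaw i, expMeasure, gammaMeasure,
        withDensity_apply _ measurableSet_Iio,
        show gammaPDF 1 1 = exponentialPDF 1 from rfl]
      exact lintegral_exponentialPDF_of_nonpos le_rfl
    rw [ae_iff]
    convert h0 using 2
    ext ω; simp [not_le]
  have hS0 : ∀ n : ℕ, ∀ᵐ ω ∂ℙ, 0 ≤ ∑ i ∈ Finset.range (n+1), q^i * W i ω := by
    intro n
    have hall : ∀ᵐ ω ∂ℙ, ∀ i, 0 ≤ W i ω := MeasureTheory.ae_all_iff.2 hW0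
    exact hall.mono fun ω h =>
      Finset.sum_nonneg fun i _ => mul_nonneg (pow_pos hq0 i).le (h i)
  intro n
  induction n with
  | zero =>
    intro t ht
    have hset : {ω | t < ∑ i ∈ Finset.range 1, q^i * W i ω} = W 0 ⁻¹' Ioi t := by
      ext ω; simp [Finset.sum_range_one]
    have hmyc : myc q 0 0 = 1 := by simp [myc, myphi_zero]
    rw [hset, Measure.map_apply (hWmeas 0) measurableSet_Ioi |>.symm, hWlaw 0,
      expMeasure_Ioi one_pos t]
    rw [Finset.sum_range_one, hmyc, max_eq_left ht]
    constructor
    · norm_num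
    · positivity
  | succ n ih =>
    intro t ht
    set X : Ω → ℝ := fun ω => ∑ i ∈ Finset.range (n+1), q^i * W i ω with hXdef
    have hXmeas : Measurable X := by
      apply Finset.measurable_sum
      exact fun i _ => (hWmeas i).const_mul _
    set r : ℝ := (q^(n+1))⁻¹ with hrdef
    have hr : 0 < r := by positivity
    have hind : IndepFun X (Y (n+1)) ℙ := by
      have h := hYindep.indepFun_finsetSum_of_notMem hYmeas
        (s := Finset.range (n+1)) (i := n+1) (by simp)
      have hfun : (∑ j ∈ Finset.range (n+1), Y j) = X := by
        funext ω; rw [Finset.sum_apply]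
      rwa [hfun] at h
    set H : ℝ → ℝ := fun s =>
      if 0 ≤ s then ∑ j ∈ Finset.range (n+1), myc q n j * Real.exp (-((q^j)⁻¹ * s)) else 1
      with hHdef
    have hHmeas : Measurable H := by
      refine Measurable.ite (measurableSet_le measurable_const measurable_id) ?_ measurable_const
      exact Finset.measurable_sum _ fun j _ =>
        (measurable_const.mul ((measurable_id.const_mul _).neg.exp))
    have hH0 : ∀ s, 0 ≤ H s := by
      intro s
      simp only [hHdef]
      split_ifs with h
      · exact (ih s h).2
      · norm_num
    have hH1 : ∀ s, H s ≤ 1 := by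
      intro s
      simp only [hHdef]
      split_ifs with h
      · have h1 := (ih s h).1
        have h2 : ℙ {ω | s < X ω} ≤ 1 := prob_le_one
        rw [h1] at h2
        exact ENNReal.ofReal_le_one.mp h2
      · exact le_refl 1
    have hsurv : ∀ s, ℙ {ω | s < X ω} = ENNReal.ofReal (H s) := by
      intro s
      simp only [hHdef]
      split_ifs with h
      · exact (ih s h).1
      · push_neg at h
        have hae : ∀ᵐ ω ∂ℙ, s < X ω :=
          (hS0 n).mono fun ω h0 => lt_of_lt_of_le h h0
        have h2 : ℙ {ω | s < X ω}ᶜ = 0 := by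
          rw [show {ω | s < X ω}ᶜ = {ω | ¬ s < X ω} from rfl]
          exact hae
        rw [measure_congr (MeasureTheory.ae_eq_univ.2 h2), measure_univ, ENNReal.ofReal_one]
    have hsetstep : {ω | t < ∑ i ∈ Finset.range (n+1+1), q^i * W i ω}
        = {ω | t < X ω + Y (n+1) ω} := by
      ext ω
      rw [Set.mem_setOf_eq, Set.mem_setOf_eq, Finset.sum_range_succ]
    have hconv := conv_step X (Y (n+1)) hXmeas (hYmeas (n+1)) hind hr (hYlaw (n+1))
      H hHmeas hH0 hH1 hsurv t
    have hintH : (∫ y in Ioi (0:ℝ), r * Real.exp (-(r * y)) * H (t - y))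
        = (∑ j ∈ Finset.range (n+1), myc q n j * (r / ((q^j)⁻¹ - r)) *
            (Real.exp (-(r * t)) - Real.exp (-((q^j)⁻¹ * t)))) + Real.exp (-(r * t)) := by
      exact integral_H r t hr ht (n+1) (myc q n) (fun j => (q^j)⁻¹)
        (fun j => by positivity)
        (fun j hj => by
          have hlt : q^(n+1) < q^j := pow_lt_pow_right_of_lt_one₀ hq0 hq1 (by omega)
          intro hcon
          exact absurd (inv_injective hcon) hlt.ne')
    have hcomb := coeff_combine hq0 hq1 n (fun j => Real.exp (-((q^j)⁻¹ * t)))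
      (Real.exp (-((q^(n+1))⁻¹ * t)))
    have hfin : (∫ y in Ioi (0:ℝ), r * Real.exp (-(r * y)) * H (t - y))
        = ∑ j ∈ Finset.range (n+1+1), myc q (n+1) j * Real.exp (-((q^j)⁻¹ * t)) := by
      rw [hintH, hrdef]
      rw [Finset.sum_range_succ (fun j => myc q (n+1) j * Real.exp (-((q^j)⁻¹ * t))) (n+1)]
      exact hcomb
    have hnonneg : 0 ≤ ∫ y in Ioi (0:ℝ), r * Real.exp (-(r * y)) * H (t - y) :=
      setIntegral_nonneg measurableSet_Ioi fun y _ =>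
        mul_nonneg (by positivity) (hH0 _)
    constructor
    · rw [hsetstep, hconv, hfin]
    · rw [← hfin]; exact hnonneg

/-- For `W_0,…,W_n` i.i.d. standard exponentials and `0 < q < 1`, `K_n = ∑_{i=0}^n q^i W_i`
satisfies `P(K_n > t) = ∑_{j=0}^n ((-1)^j q^{j(j+1)/2}/(φ_j(q)φ_{n-j}(q))) exp(-q^{-j} t)`. -/
theorem stmt2 {Ω : Type*} [MeasureSpace Ω] [IsProbabilityMeasure (ℙ : Measure Ω)]
    (q : ℝ) (hq0 : 0 < q) (hq1 : q < 1) (n : ℕ) (W : ℕ → Ω → ℝ)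
    (hWmeas : ∀ i, Measurable (W i))
    (hWindep : iIndepFun W ℙ)
    (hWlaw : ∀ i, Measure.map (W i) ℙ = expMeasure 1)
    (φ : ℕ → ℝ) (hφ : ∀ m, φ m = ∏ i ∈ Finset.Icc 1 m, (1 - q ^ i))
    (t : ℝ) (ht : 0 ≤ t) :
    (ℙ {ω | t < ∑ i ∈ Finset.range (n + 1), q ^ i * W i ω}).toReal =
      ∑ j ∈ Finset.range (n + 1),
        (-1 : ℝ) ^ j * q ^ (j * (j + 1) / 2) / (φ j * φ (n - j)) *
          Real.exp (-(q ^ (-(j : ℤ)) * t)) := by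
  obtain ⟨h1, h2⟩ := key_induction hq0 hq1 W hWmeas hWindep hWlaw n t ht
  rw [h1, ENNReal.toReal_ofReal h2]
  refine Finset.sum_congr rfl fun j _ => ?_
  rw [myc, show myphi q j = φ j from (hφ j).symm,
    show myphi q (n - j) = φ (n - j) from (hφ (n - j)).symm,
    show (q : ℝ) ^ (-(j : ℤ)) = (q ^ j)⁻¹ by rw [zpow_neg, zpow_natCast]]
end

section
/- Let A be a non-negative random variable and W an independent standard exponential random variable. Then for all s, z ≥ 0, P(A + W ∈ [s, s+z]) ≤ z · P(A ≤ s + z). -/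
open MeasureTheory ProbabilityTheory

lemma expMeasure_one_apply_le (t : Set ℝ) (ht : MeasurableSet t) :
    expMeasure 1 t ≤ volume t := by
  rw [expMeasure, gammaMeasure, withDensity_apply _ ht]
  calc ∫⁻ x in t, gammaPDF 1 1 x ≤ ∫⁻ _ in t, 1 := by
        refine setLIntegral_mono measurable_const (fun x _ => ?_)
        rw [show gammaPDF 1 1 x = exponentialPDF 1 x from rfl, exponentialPDF_eq]
        split_ifs with h
        · calc ENNReal.ofReal (1 * Real.exp (-(1 * x)))
              ≤ ENNReal.ofReal 1 := ENNReal.ofReal_le_ofReal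
                (by rw [one_mul, one_mul]; exact Real.exp_le_one_iff.2 (by linarith))
            _ = 1 := ENNReal.ofReal_one
        · simp
    _ = volume t := by simp

lemma expMeasure_one_neg (t : Set ℝ) (ht : t ⊆ Set.Iio 0) :
    expMeasure 1 t = 0 := by
  refine le_antisymm ?_ zero_le
  calc expMeasure 1 t ≤ expMeasure 1 (Set.Iio 0) := measure_mono ht
    _ = 0 := by
        rw [expMeasure, gammaMeasure, withDensity_apply _ measurableSet_Iio]
        exact lintegral_exponentialPDF_of_nonpos le_rfl

/-- If `A` is a non-negative random variable and `W` an independent standard exponential,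
then for all `s, z ≥ 0`, `P(A + W ∈ [s, s+z]) ≤ z · P(A ≤ s + z)`. -/
theorem stmt9 {Ω : Type*} [MeasureSpace Ω] [IsProbabilityMeasure (ℙ : Measure Ω)]
    (A W : Ω → ℝ) (hA : Measurable A) (hApos : ∀ ω, 0 ≤ A ω) (hW : Measurable W)
    (hWlaw : Measure.map W ℙ = expMeasure 1) (hindep : IndepFun A W ℙ)
    (s z : ℝ) (hs : 0 ≤ s) (hz : 0 ≤ z) :
    ℙ {ω | A ω + W ω ∈ Set.Icc s (s + z)} ≤ ENNReal.ofReal z * ℙ {ω | A ω ≤ s + z} := by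
  haveI : IsProbabilityMeasure (expMeasure 1) := isProbabilityMeasure_expMeasure one_pos
  have hprod : Measure.map (fun ω => (A ω, W ω)) ℙ
      = (Measure.map A ℙ).prod (Measure.map W ℙ) :=
    (indepFun_iff_map_prod_eq_prod_map_map hA.aemeasurable hW.aemeasurable).1 hindep
  have hS : MeasurableSet {p : ℝ × ℝ | p.1 + p.2 ∈ Set.Icc s (s + z)} :=
    (measurable_fst.add measurable_snd) measurableSet_Icc
  have h1 : ℙ {ω | A ω + W ω ∈ Set.Icc s (s + z)}
      = ∫⁻ a, expMeasure 1 {w | a + w ∈ Set.Icc s (s + z)} ∂(Measure.map A ℙ) := by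
    have := Measure.map_apply (hA.prodMk hW) hS (μ := ℙ)
    rw [hprod, hWlaw, Measure.prod_apply hS] at this
    exact this.symm
  rw [h1]
  have h2 : ℙ {ω | A ω ≤ s + z} = (Measure.map A ℙ) (Set.Iic (s + z)) := by
    rw [Measure.map_apply hA measurableSet_Iic]; rfl
  rw [h2]
  calc ∫⁻ a, expMeasure 1 {w | a + w ∈ Set.Icc s (s + z)} ∂(Measure.map A ℙ)
      ≤ ∫⁻ a, (Set.Iic (s + z)).indicator (fun _ => ENNReal.ofReal z) a
          ∂(Measure.map A ℙ) := by
        refine lintegral_mono fun a => ?_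
        have hset : {w | a + w ∈ Set.Icc s (s + z)} = Set.Icc (s - a) (s + z - a) := by
          ext w; simp [Set.mem_Icc]; constructor <;> intro ⟨h1, h2⟩ <;>
            constructor <;> linarith
        rw [hset]
        by_cases ha : a ≤ s + z
        · rw [Set.indicator_of_mem (Set.mem_Iic.2 ha)]
          calc expMeasure 1 (Set.Icc (s - a) (s + z - a))
              ≤ volume (Set.Icc (s - a) (s + z - a)) :=
                expMeasure_one_apply_le _ measurableSet_Icc
            _ = ENNReal.ofReal z := by rw [Real.volume_Icc]; ring_nf
        · rw [expMeasure_one_neg]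
          · exact zero_le
          · intro w hw
            have := hw.2
            simp only [Set.mem_Iio]
            linarith [not_le.1 ha]
    _ = ENNReal.ofReal z * (Measure.map A ℙ) (Set.Iic (s + z)) := by
        rw [lintegral_indicator measurableSet_Iic]
        simp [mul_comm]
end

section
/- Let E be a finite index set, let (A_e)_{e∈E} be identically distributed real random variables each with the law of a random variable A, let (B_e)_{e∈E} be real random variables independent of the family (A_e)_{e∈E} (but possibly dependent among themselves), and let A' be a copy of A independent of (B_e). Then for any reals (c_e), P(∩_{e∈E} {A_e + B_e > c_e}) ≤ P(∩_{e∈E} {A' + B_e > c_e}). -/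
open MeasureTheory ProbabilityTheory

/-- For a finite index set `E`, identically distributed `(A_e)` each with the law of `A'`,
`(B_e)` independent of the family `(A_e)`, and `A'` a copy of `A` independent of `(B_e)`:
`P(∩_e {A_e + B_e > c_e}) ≤ P(∩_e {A' + B_e > c_e})`. -/
theorem stmt11 {Ω : Type*} [MeasureSpace Ω] [IsProbabilityMeasure (ℙ : Measure Ω)]
    {E : Type*} [Fintype E] (A B : E → Ω → ℝ) (A' : Ω → ℝ)
    (hA : ∀ e, Measurable (A e)) (hB : ∀ e, Measurable (B e)) (hA' : Measurable A')
    (hid : ∀ e, Measure.map (A e) ℙ = Measure.map A' ℙ)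
    (hindep : IndepFun (fun ω (e : E) => A e ω) (fun ω (e : E) => B e ω) ℙ)
    (hindep' : IndepFun A' (fun ω (e : E) => B e ω) ℙ)
    (c : E → ℝ) :
    ℙ {ω | ∀ e, c e < A e ω + B e ω} ≤ ℙ {ω | ∀ e, c e < A' ω + B e ω} := by
  classical
  set μA := Measure.map (fun ω (e : E) => A e ω) ℙ with hμA
  set μA' := Measure.map A' ℙ with hμA'
  set μB := Measure.map (fun ω (e : E) => B e ω) ℙ with hμB
  have hAm : Measurable (fun ω (e : E) => A e ω) := measurable_pi_lambda _ hA
  have hBm : Measurable (fun ω (e : E) => B e ω) := measurable_pi_lambda _ hB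
  haveI : IsProbabilityMeasure μA := Measure.isProbabilityMeasure_map hAm.aemeasurable
  haveI : IsProbabilityMeasure μA' := Measure.isProbabilityMeasure_map hA'.aemeasurable
  haveI : IsProbabilityMeasure μB := Measure.isProbabilityMeasure_map hBm.aemeasurable
  have hmap1 : Measure.map (fun ω => ((fun e => A e ω), (fun e => B e ω))) ℙ = μA.prod μB :=
    (indepFun_iff_map_prod_eq_prod_map_map hAm.aemeasurable hBm.aemeasurable).mp hindep
  have hmap2 : Measure.map (fun ω => (A' ω, (fun e => B e ω))) ℙ = μA'.prod μB :=
    (indepFun_iff_map_prod_eq_prod_map_map hA'.aemeasurable hBm.aemeasurable).mp hindep'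
  have hS : MeasurableSet {p : (E → ℝ) × (E → ℝ) | ∀ e, c e < p.1 e + p.2 e} := by
    have h : {p : (E → ℝ) × (E → ℝ) | ∀ e, c e < p.1 e + p.2 e}
        = ⋂ e, {p | c e < p.1 e + p.2 e} := by ext p; simp
    rw [h]
    exact MeasurableSet.iInter fun e => measurableSet_lt measurable_const (by fun_prop)
  have hS' : MeasurableSet {p : ℝ × (E → ℝ) | ∀ e, c e < p.1 + p.2 e} := by
    have h : {p : ℝ × (E → ℝ) | ∀ e, c e < p.1 + p.2 e}
        = ⋂ e, {p | c e < p.1 + p.2 e} := by ext p; simp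
    rw [h]
    exact MeasurableSet.iInter fun e => measurableSet_lt measurable_const (by fun_prop)
  have hL : ℙ {ω | ∀ e, c e < A e ω + B e ω}
      = (μA.prod μB) {p | ∀ e, c e < p.1 e + p.2 e} := by
    rw [← hmap1, Measure.map_apply (hAm.prodMk hBm) hS]; rfl
  have hR : ℙ {ω | ∀ e, c e < A' ω + B e ω}
      = (μA'.prod μB) {p | ∀ e, c e < p.1 + p.2 e} := by
    rw [← hmap2, Measure.map_apply (hA'.prodMk hBm) hS']; rfl
  rw [hL, hR, Measure.prod_apply_symm hS, Measure.prod_apply_symm hS']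
  refine lintegral_mono fun b => ?_
  by_cases hE : Nonempty E
  · obtain ⟨e₀, he₀⟩ := Finite.exists_max (fun e => c e - b e)
    have hset' : ((fun x => (x, b)) ⁻¹' {p : ℝ × (E → ℝ) | ∀ e, c e < p.1 + p.2 e})
        = Set.Ioi (c e₀ - b e₀) := by
      ext x
      simp only [Set.mem_preimage, Set.mem_setOf_eq, Set.mem_Ioi]
      constructor
      · intro h; have := h e₀; linarith
      · intro h e; have := he₀ e; linarith
    have hsub : ((fun a => (a, b)) ⁻¹' {p : (E → ℝ) × (E → ℝ) | ∀ e, c e < p.1 e + p.2 e})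
        ⊆ (Function.eval e₀) ⁻¹' Set.Ioi (c e₀ - b e₀) := by
      intro a ha
      have := ha e₀
      simp only [Set.mem_preimage, Set.mem_Ioi, Function.eval]
      linarith
    have hkey : μA ((Function.eval e₀) ⁻¹' Set.Ioi (c e₀ - b e₀))
        = μA' (Set.Ioi (c e₀ - b e₀)) := by
      rw [hμA, Measure.map_apply hAm ((measurable_pi_apply e₀) measurableSet_Ioi),
        ← hid e₀, Measure.map_apply (hA e₀) measurableSet_Ioi]
      rfl
    calc μA _ ≤ μA ((Function.eval e₀) ⁻¹' Set.Ioi (c e₀ - b e₀)) := measure_mono hsub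
      _ = μA' (Set.Ioi (c e₀ - b e₀)) := hkey
      _ = _ := by rw [hset']
  · have h1 : ((fun a => (a, b)) ⁻¹' {p : (E → ℝ) × (E → ℝ) | ∀ e, c e < p.1 e + p.2 e})
        = Set.univ := Set.eq_univ_iff_forall.mpr fun a e => (hE ⟨e⟩).elim
    have h2 : ((fun x => (x, b)) ⁻¹' {p : ℝ × (E → ℝ) | ∀ e, c e < p.1 + p.2 e})
        = Set.univ := Set.eq_univ_iff_forall.mpr fun a e => (hE ⟨e⟩).elim
    rw [h1, h2, measure_univ, measure_univ]
end

section
/- Let f_∞ denote the density of K_∞ = ∑_{i=0}^∞ q^i W_i (0 < q < 1, W_i i.i.d. standard exponentials) and suppose f_∞(s) ≤ C e^{−s} and P(K_∞ > M) ≤ C e^{−max(M,0)} for some constant C. Then ∫_0^∞ f_∞(s) P(K_∞ > L − qs) P(K_∞ > L − s) ds ≤ C' exp(−min{1/q, 2−q}·L) for all L > 0, where C' depends only on C and q. -/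
open MeasureTheory ProbabilityTheory

set_option maxHeartbeats 1000000

private lemma expInt13 (a : ℝ) {b : ℝ} (hb : 0 < b) :
    ∫ x in Set.Ioi a, Real.exp (-b * x) = Real.exp (-b * a) / b := by
  have hder : ∀ x ∈ Set.Ici a,
      HasDerivAt (fun y => -(Real.exp (-b * y) / b)) (Real.exp (-b * x)) x := by
    intro x _
    have h1 : HasDerivAt (fun y : ℝ => -b * y) (-b) x := by
      simpa using (hasDerivAt_id x).const_mul (-b)
    have h2 := ((h1.exp).div_const b).neg
    refine h2.congr_deriv ?_
    field_simp [hb.ne']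
  have htend : Filter.Tendsto (fun y => -(Real.exp (-b * y) / b)) Filter.atTop (nhds 0) := by
    have h1 : Filter.Tendsto (fun y : ℝ => Real.exp (-(b * y))) Filter.atTop (nhds 0) :=
      Real.tendsto_exp_neg_atTop_nhds_zero.comp (Filter.tendsto_id.const_mul_atTop hb)
    have := (h1.div_const b).neg
    simpa [neg_mul] using this
  have := MeasureTheory.integral_Ioi_of_hasDerivAt_of_tendsto'
    (f' := fun x => Real.exp (-b * x)) hder (exp_neg_integrableOn_Ioi a hb) htend
  rw [this]; ring

/-- If `f_∞` is the density of `K_∞ = ∑_{i=0}^∞ q^i W_i` with `f_∞(s) ≤ C e^{−s}` and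
`P(K_∞ > M) ≤ C e^{−max(M,0)}`, then
`∫_0^∞ f_∞(s) P(K_∞ > L − qs) P(K_∞ > L − s) ds ≤ C' exp(−min{1/q, 2−q}·L)` for all `L > 0`,
where `C'` depends only on `C` and `q`. -/
theorem stmt13 {Ω : Type*} [MeasureSpace Ω] [IsProbabilityMeasure (ℙ : Measure Ω)]
    (q : ℝ) (hq0 : 0 < q) (hq1 : q < 1) (C : ℝ) :
    ∃ C' : ℝ, ∀ (W : ℕ → Ω → ℝ) (f : ℝ → ℝ),
      (∀ i, Measurable (W i)) →
      iIndepFun W ℙ →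
      (∀ i, Measure.map (W i) ℙ = expMeasure 1) →
      Measure.map (fun ω => ∑' i : ℕ, q ^ i * W i ω) ℙ =
        volume.withDensity (fun x => ENNReal.ofReal (f x)) →
      (∀ x : ℝ, f x ≤ C * Real.exp (-x)) →
      (∀ M : ℝ, (ℙ {ω | M < ∑' i : ℕ, q ^ i * W i ω}).toReal ≤ C * Real.exp (-(max M 0))) →
      ∀ L : ℝ, 0 < L →
        (∫ x in Set.Ioi (0 : ℝ),
            f x * (ℙ {ω | L - q * x < ∑' i : ℕ, q ^ i * W i ω}).toReal *
              (ℙ {ω | L - x < ∑' i : ℕ, q ^ i * W i ω}).toReal) ≤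
          C' * Real.exp (-(min (1 / q) (2 - q)) * L) := by
  have hq1' : 0 < 1 - q := by linarith
  set c := max C 0 with hc_def
  have hc : 0 ≤ c := le_max_right C 0
  have hA : (0:ℝ) ≤ c ^ 3 := by positivity
  refine ⟨c ^ 3 * (1 / q + 1 / (1 - q) + 1), ?_⟩
  intro W f _ _ _ _ hf htail L hL
  set h : ℝ → ℝ := fun x => c ^ 3 * Real.exp (-x - max (L - q * x) 0 - max (L - x) 0) with hh
  have hh0 : ∀ x, 0 ≤ h x := fun x => by positivity
  have hfc : ∀ x, f x ≤ c * Real.exp (-x) := fun x =>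
    (hf x).trans (mul_le_mul_of_nonneg_right (le_max_left C 0) (Real.exp_nonneg _))
  have hptail : ∀ M : ℝ, (ℙ {ω | M < ∑' i : ℕ, q ^ i * W i ω}).toReal
      ≤ c * Real.exp (-(max M 0)) := fun M =>
    (htail M).trans (mul_le_mul_of_nonneg_right (le_max_left C 0) (Real.exp_nonneg _))
  -- pointwise bound
  have hg_le : ∀ x : ℝ,
      f x * (ℙ {ω | L - q * x < ∑' i : ℕ, q ^ i * W i ω}).toReal *
        (ℙ {ω | L - x < ∑' i : ℕ, q ^ i * W i ω}).toReal ≤ h x := by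
    intro x
    set p1 := (ℙ {ω | L - q * x < ∑' i : ℕ, q ^ i * W i ω}).toReal with hp1
    set p2 := (ℙ {ω | L - x < ∑' i : ℕ, q ^ i * W i ω}).toReal with hp2
    have hp10 : 0 ≤ p1 := ENNReal.toReal_nonneg
    have hp20 : 0 ≤ p2 := ENNReal.toReal_nonneg
    have e1 : f x * p1 * p2 ≤ (c * Real.exp (-x)) * p1 * p2 :=
      mul_le_mul_of_nonneg_right (mul_le_mul_of_nonneg_right (hfc x) hp10) hp20
    have e2 : (c * Real.exp (-x)) * p1 * p2
        ≤ (c * Real.exp (-x)) * (c * Real.exp (-(max (L - q * x) 0))) * p2 :=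
      mul_le_mul_of_nonneg_right
        (mul_le_mul_of_nonneg_left (hptail (L - q * x)) (by positivity)) hp20
    have e3 : (c * Real.exp (-x)) * (c * Real.exp (-(max (L - q * x) 0))) * p2
        ≤ (c * Real.exp (-x)) * (c * Real.exp (-(max (L - q * x) 0)))
          * (c * Real.exp (-(max (L - x) 0))) :=
      mul_le_mul_of_nonneg_left (hptail (L - x)) (by positivity)
    refine (e1.trans (e2.trans e3)).trans_eq ?_
    show _ = c ^ 3 * Real.exp (-x - max (L - q * x) 0 - max (L - x) 0)
    rw [show -x - max (L - q * x) 0 - max (L - x) 0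
        = (-x) + (-(max (L - q * x) 0)) + (-(max (L - x) 0)) by ring,
      Real.exp_add, Real.exp_add]
    ring
  -- h is continuous, nonnegative, dominated by c^3 exp(-x)
  have hcont : Continuous h := by
    apply continuous_const.mul
    exact Real.continuous_exp.comp
      (((continuous_id.neg.sub ((continuous_const.sub (continuous_const.mul continuous_id)).max
        continuous_const)).sub ((continuous_const.sub continuous_id).max continuous_const)))
  have hbound : ∀ x, h x ≤ c ^ 3 * Real.exp (-x) := by
    intro x
    refine mul_le_mul_of_nonneg_left ?_ hA
    apply Real.exp_le_exp.mpr
    have h1 : (0:ℝ) ≤ max (L - q * x) 0 := le_max_right _ _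
    have h2 : (0:ℝ) ≤ max (L - x) 0 := le_max_right _ _
    linarith
  have hint : IntegrableOn h (Set.Ioi (0:ℝ)) := by
    have hbase : IntegrableOn (fun x => c ^ 3 * Real.exp (-x)) (Set.Ioi (0:ℝ)) := by
      have := (exp_neg_integrableOn_Ioi (0:ℝ) one_pos).const_mul (c ^ 3)
      simpa [IntegrableOn, neg_mul, one_mul] using this
    refine Integrable.mono hbase hcont.aestronglyMeasurable.restrict ?_
    filter_upwards with x
    rw [Real.norm_eq_abs, Real.norm_eq_abs, abs_of_nonneg (hh0 x),
      abs_of_nonneg (by positivity)]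
    exact hbound x
  -- step 1: compare with h
  have step1 : (∫ x in Set.Ioi (0 : ℝ),
      f x * (ℙ {ω | L - q * x < ∑' i : ℕ, q ^ i * W i ω}).toReal *
        (ℙ {ω | L - x < ∑' i : ℕ, q ^ i * W i ω}).toReal)
      ≤ ∫ x in Set.Ioi (0:ℝ), h x := by
    by_cases hgint : IntegrableOn (fun x =>
        f x * (ℙ {ω | L - q * x < ∑' i : ℕ, q ^ i * W i ω}).toReal *
          (ℙ {ω | L - x < ∑' i : ℕ, q ^ i * W i ω}).toReal) (Set.Ioi (0:ℝ))
    · exact setIntegral_mono_on hgint hint measurableSet_Ioi (fun x _ => hg_le x)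
    · rw [integral_undef hgint]
      exact setIntegral_nonneg measurableSet_Ioi (fun x _ => hh0 x)
  have hLq : L ≤ L / q := by
    rw [le_div_iff₀ hq0]; nlinarith
  have hLqpos : 0 < L / q := by positivity
  -- split the integral
  have hsplit1 : (∫ x in Set.Ioi (0:ℝ), h x)
      = (∫ x in Set.Ioc (0:ℝ) L, h x) + ∫ x in Set.Ioi L, h x := by
    rw [← MeasureTheory.setIntegral_union (Set.Ioc_disjoint_Ioi le_rfl) measurableSet_Ioi
      (hint.mono_set Set.Ioc_subset_Ioi_self) (hint.mono_set (Set.Ioi_subset_Ioi hL.le)),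
      Set.Ioc_union_Ioi_eq_Ioi hL.le]
  have hsplit2 : (∫ x in Set.Ioi L, h x)
      = (∫ x in Set.Ioc L (L / q), h x) + ∫ x in Set.Ioi (L / q), h x := by
    rw [← MeasureTheory.setIntegral_union (Set.Ioc_disjoint_Ioi le_rfl) measurableSet_Ioi
      (hint.mono_set (Set.Ioc_subset_Ioi_self.trans (Set.Ioi_subset_Ioi hL.le)))
      (hint.mono_set (Set.Ioi_subset_Ioi hLqpos.le)),
      Set.Ioc_union_Ioi_eq_Ioi hLq]
  -- piece 1 : (0, L]
  have piece1 : (∫ x in Set.Ioc (0:ℝ) L, h x) ≤ c ^ 3 / q * Real.exp (-(2 - q) * L) := by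
    have hb1 : ∀ x ∈ Set.Ioc (0:ℝ) L, h x ≤ c ^ 3 * Real.exp (q * x - 2 * L) := by
      intro x _
      refine mul_le_mul_of_nonneg_left ?_ hA
      apply Real.exp_le_exp.mpr
      have h1 : L - q * x ≤ max (L - q * x) 0 := le_max_left _ _
      have h2 : L - x ≤ max (L - x) 0 := le_max_left _ _
      linarith
    have hcont1 : Continuous fun x : ℝ => Real.exp (q * x - 2 * L) :=
      Real.continuous_exp.comp ((continuous_const.mul continuous_id).sub continuous_const)
    have hi1 : IntegrableOn (fun x => c ^ 3 * Real.exp (q * x - 2 * L))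
        (Set.Ioc (0:ℝ) L) := (continuous_const.mul hcont1).integrableOn_Ioc
    have hder : ∀ x : ℝ, HasDerivAt (fun y => Real.exp (q * y - 2 * L) / q)
        (Real.exp (q * x - 2 * L)) x := by
      intro x
      have h1 : HasDerivAt (fun y : ℝ => q * y - 2 * L) q x := by
        simpa using ((hasDerivAt_id x).const_mul q).sub_const (2 * L)
      have h2 := (h1.exp).div_const q
      refine h2.congr_deriv ?_
      field_simp [hq0.ne']
    have hval : (∫ x in (0:ℝ)..L, Real.exp (q * x - 2 * L))
        = Real.exp (q * L - 2 * L) / q - Real.exp (q * 0 - 2 * L) / q := by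
      exact intervalIntegral.integral_eq_sub_of_hasDerivAt (fun x _ => hder x)
        (hcont1.intervalIntegrable 0 L)
    calc (∫ x in Set.Ioc (0:ℝ) L, h x)
        ≤ ∫ x in Set.Ioc (0:ℝ) L, c ^ 3 * Real.exp (q * x - 2 * L) :=
          setIntegral_mono_on (hint.mono_set Set.Ioc_subset_Ioi_self) hi1
            measurableSet_Ioc hb1
      _ = c ^ 3 * ∫ x in (0:ℝ)..L, Real.exp (q * x - 2 * L) := by
          rw [intervalIntegral.integral_of_le hL.le, ← integral_const_mul]
      _ = c ^ 3 * (Real.exp (q * L - 2 * L) / q - Real.exp (q * 0 - 2 * L) / q) := by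
          rw [hval]
      _ ≤ c ^ 3 / q * Real.exp (-(2 - q) * L) := by
          have h1 : Real.exp (q * L - 2 * L) = Real.exp (-(2 - q) * L) := by ring_nf
          have h2 : (0:ℝ) ≤ Real.exp (q * 0 - 2 * L) / q := by positivity
          rw [h1]
          have : c ^ 3 * (Real.exp (-(2 - q) * L) / q - Real.exp (q * 0 - 2 * L) / q)
              ≤ c ^ 3 * (Real.exp (-(2 - q) * L) / q) :=
            mul_le_mul_of_nonneg_left (by linarith) hA
          calc c ^ 3 * (Real.exp (-(2 - q) * L) / q - Real.exp (q * 0 - 2 * L) / q)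
              ≤ c ^ 3 * (Real.exp (-(2 - q) * L) / q) := this
            _ = c ^ 3 / q * Real.exp (-(2 - q) * L) := by ring
  -- piece 2 : (L, L/q]
  have piece2 : (∫ x in Set.Ioc L (L / q), h x)
      ≤ c ^ 3 / (1 - q) * Real.exp (-(2 - q) * L) := by
    have hb2 : ∀ x : ℝ, h x ≤ c ^ 3 * Real.exp (-L) * Real.exp (-(1 - q) * x) := by
      intro x
      rw [mul_assoc, ← Real.exp_add]
      refine mul_le_mul_of_nonneg_left ?_ hA
      apply Real.exp_le_exp.mpr
      have h1 : L - q * x ≤ max (L - q * x) 0 := le_max_left _ _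
      have h2 : (0:ℝ) ≤ max (L - x) 0 := le_max_right _ _
      nlinarith
    have hi2 : IntegrableOn (fun x => c ^ 3 * Real.exp (-L) * Real.exp (-(1 - q) * x))
        (Set.Ioi L) := (exp_neg_integrableOn_Ioi L hq1').const_mul _
    calc (∫ x in Set.Ioc L (L / q), h x)
        ≤ ∫ x in Set.Ioc L (L / q), c ^ 3 * Real.exp (-L) * Real.exp (-(1 - q) * x) :=
          setIntegral_mono_on
            (hint.mono_set (Set.Ioc_subset_Ioi_self.trans (Set.Ioi_subset_Ioi hL.le)))
            (hi2.mono_set Set.Ioc_subset_Ioi_self) measurableSet_Ioc (fun x _ => hb2 x)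
      _ ≤ ∫ x in Set.Ioi L, c ^ 3 * Real.exp (-L) * Real.exp (-(1 - q) * x) :=
          setIntegral_mono_set hi2 (Filter.Eventually.of_forall fun x => by positivity)
            (HasSubset.Subset.eventuallyLE Set.Ioc_subset_Ioi_self)
      _ = c ^ 3 * Real.exp (-L) * (Real.exp (-(1 - q) * L) / (1 - q)) := by
          rw [integral_const_mul, expInt13 L hq1']
      _ = c ^ 3 / (1 - q) * (Real.exp (-L) * Real.exp (-(1 - q) * L)) := by ring
      _ = c ^ 3 / (1 - q) * Real.exp (-(2 - q) * L) := by
          rw [← Real.exp_add]; ring_nf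
  -- piece 3 : (L/q, ∞)
  have piece3 : (∫ x in Set.Ioi (L / q), h x) ≤ c ^ 3 * Real.exp (-(2 - q) * L) := by
    have hi3 : IntegrableOn (fun x => c ^ 3 * Real.exp (-x)) (Set.Ioi (L / q)) := by
      have := (exp_neg_integrableOn_Ioi (L / q) one_pos).const_mul (c ^ 3)
      simpa [IntegrableOn, neg_mul, one_mul] using this
    calc (∫ x in Set.Ioi (L / q), h x)
        ≤ ∫ x in Set.Ioi (L / q), c ^ 3 * Real.exp (-x) :=
          setIntegral_mono_on (hint.mono_set (Set.Ioi_subset_Ioi hLqpos.le)) hi3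
            measurableSet_Ioi (fun x _ => hbound x)
      _ = c ^ 3 * Real.exp (-(L / q)) := by
          rw [integral_const_mul, integral_exp_neg_Ioi]
      _ ≤ c ^ 3 * Real.exp (-(2 - q) * L) := by
          refine mul_le_mul_of_nonneg_left ?_ hA
          apply Real.exp_le_exp.mpr
          have h1 : (2 - q) * L ≤ L / q := by
            rw [le_div_iff₀ hq0]
            nlinarith [mul_nonneg hL.le (sq_nonneg (1 - q))]
          linarith
  have hmin : min (1 / q) (2 - q) = 2 - q := by
    apply min_eq_right
    rw [le_div_iff₀ hq0]
    nlinarith [sq_nonneg (1 - q)]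
  calc (∫ x in Set.Ioi (0 : ℝ),
      f x * (ℙ {ω | L - q * x < ∑' i : ℕ, q ^ i * W i ω}).toReal *
        (ℙ {ω | L - x < ∑' i : ℕ, q ^ i * W i ω}).toReal)
      ≤ ∫ x in Set.Ioi (0:ℝ), h x := step1
    _ = (∫ x in Set.Ioc (0:ℝ) L, h x) + ((∫ x in Set.Ioc L (L / q), h x)
        + ∫ x in Set.Ioi (L / q), h x) := by rw [hsplit1, hsplit2]
    _ ≤ c ^ 3 / q * Real.exp (-(2 - q) * L) + (c ^ 3 / (1 - q) * Real.exp (-(2 - q) * L)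
        + c ^ 3 * Real.exp (-(2 - q) * L)) := add_le_add piece1 (add_le_add piece2 piece3)
    _ = c ^ 3 * (1 / q + 1 / (1 - q) + 1) * Real.exp (-(2 - q) * L) := by ring
    _ = c ^ 3 * (1 / q + 1 / (1 - q) + 1) * Real.exp (-(min (1 / q) (2 - q)) * L) := by
        rw [hmin]
end
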